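/- Let 1 < p ≤ q < ∞. There exists C > 0 such that for every x ∈ ℓ^p_q(ℤ^d), Mx ∈ ℓ^p_q(ℤ^d) and ‖Mx‖_{ℓ^p_q(ℤ^d)} ≤ C ‖x‖_{ℓ^p_q(ℤ^d)}. (Boundedness of the discrete Hardy–Littlewood maximal operator on discrete Morrey spaces.) -/

import Mathlib

open scoped BigOperators ENNReal

noncomputable section

/-- The discrete cube `S_{m,N} = {k : ‖k - m‖_∞ ≤ N}` in `ℤ^d`. -/
def cubeS (d : ℕ) (m : Fin d → ℤ) (N : ℕ) : Finset (Fin d → ℤ) :=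
  Finset.Icc (fun i => m i - N) (fun i => m i + N)

/-- `R_{m,N}`: the cube `S_{m,N}` with points having some coordinate `m i + N` removed. -/
def cubeR (d : ℕ) (m : Fin d → ℤ) (N : ℕ) : Finset (Fin d → ℤ) :=
  Finset.Ico (fun i => m i - N) (fun i => m i + N)

/-- The sup-norm `‖k‖_∞` of a point of `ℤ^d`, as a natural number. -/
def snorm' (d : ℕ) (k : Fin d → ℤ) : ℕ :=
  Finset.univ.sup fun i => (k i).natAbs

/-- The (centered, odd) discrete Hardy–Littlewood maximal operator. -/
def maxOp (d : ℕ) (x : (Fin d → ℤ) → ℝ) (m : Fin d → ℤ) : ℝ :=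
  ⨆ N : ℕ, (∑ k ∈ cubeS d m N, |x k|) / (2 * N + 1) ^ d

/-- The discrete Morrey norm `‖x‖_{ℓ^p_q(ℤ^d)}`. -/
def morreyNorm (d : ℕ) (p q : ℝ) (x : (Fin d → ℤ) → ℝ) : ℝ :=
  ⨆ mN : (Fin d → ℤ) × ℕ,
    (((2 * mN.2 + 1 : ℝ) ^ d) ^ (1 / q - 1 / p)) *
      (∑ k ∈ cubeS d mN.1 mN.2, |x k| ^ p) ^ (1 / p)

/-- Membership in the discrete Morrey space: the defining supremum is finite. -/
def MemMorrey (d : ℕ) (p q : ℝ) (x : (Fin d → ℤ) → ℝ) : Prop :=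
  BddAbove (Set.range fun mN : (Fin d → ℤ) × ℕ =>
    (((2 * mN.2 + 1 : ℝ) ^ d) ^ (1 / q - 1 / p)) *
      (∑ k ∈ cubeS d mN.1 mN.2, |x k| ^ p) ^ (1 / p))

section Aux

open MeasureTheory Set Finset

variable {d : ℕ}

lemma mem_cubeS' {m k : Fin d → ℤ} {N : ℕ} :
    k ∈ cubeS d m N ↔ ∀ i, m i - N ≤ k i ∧ k i ≤ m i + N := by
  simp [cubeS, Finset.mem_Icc, Pi.le_def, forall_and]

lemma self_mem_cubeS (m : Fin d → ℤ) (N : ℕ) : m ∈ cubeS d m N := by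
  rw [mem_cubeS']; intro i; omega

lemma card_cubeS (m : Fin d → ℤ) (N : ℕ) : (cubeS d m N).card = (2 * N + 1) ^ d := by
  rw [cubeS, Pi.card_Icc]
  have h : ∀ i : Fin d, (Finset.Icc (m i - N) (m i + N)).card = 2 * N + 1 := by
    intro i; rw [Int.card_Icc]; omega
  simp [h]

lemma card_cubeS_real (m : Fin d → ℤ) (N : ℕ) :
    ((cubeS d m N).card : ℝ) = (2 * (N : ℝ) + 1) ^ d := by
  rw [card_cubeS]; push_cast; ring

lemma cubeS_subset {m k : Fin d → ℤ} {N L : ℕ} (hk : k ∈ cubeS d m N) (hL : L ≤ N) :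
    cubeS d k L ⊆ cubeS d m (2 * N) := by
  intro j hj
  rw [mem_cubeS'] at *
  intro i
  have h1 := hk i
  have h2 := hj i
  omega

lemma cubeS_disjoint {k0 k : Fin d → ℤ} {L0 L : ℕ}
    (hk : k ∉ cubeS d k0 (2 * L0)) (hL : L ≤ L0) :
    Disjoint (cubeS d k L) (cubeS d k0 L0) := by
  rw [Finset.disjoint_left]
  intro j hj hj0
  apply hk
  rw [mem_cubeS'] at *
  intro i
  have h1 := hj i
  have h2 := hj0 i
  omega

lemma one_le_pow_real (N : ℕ) : (1 : ℝ) ≤ (2 * (N : ℝ) + 1) ^ d := by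
  apply one_le_pow₀
  have : (0:ℝ) ≤ (N:ℝ) := Nat.cast_nonneg N
  linarith

lemma pow_pos_real (N : ℕ) : (0 : ℝ) < (2 * (N : ℝ) + 1) ^ d :=
  lt_of_lt_of_le one_pos (one_le_pow_real N)

lemma maxOp_nonneg (x : (Fin d → ℤ) → ℝ) (m : Fin d → ℤ) : 0 ≤ maxOp d x m :=
  Real.iSup_nonneg fun N => by positivity

/-- Boundedness of the averages for a function supported in a finite set. -/
lemma bdd_of_supp (y : (Fin d → ℤ) → ℝ) (A : Finset (Fin d → ℤ))
    (hA : ∀ j ∉ A, y j = 0) (m : Fin d → ℤ) :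
    BddAbove (Set.range fun N : ℕ => (∑ k ∈ cubeS d m N, |y k|) / (2 * N + 1) ^ d) := by
  refine ⟨∑ j ∈ A, |y j|, ?_⟩
  rintro v ⟨N, rfl⟩
  have h1 : ∑ k ∈ cubeS d m N, |y k| ≤ ∑ j ∈ A, |y j| := by
    have e : ∑ k ∈ cubeS d m N, |y k| = ∑ k ∈ cubeS d m N ∩ A, |y k| := by
      refine (Finset.sum_subset Finset.inter_subset_left ?_).symm
      intro j hj hj'
      have : j ∉ A := fun hjA => hj' (Finset.mem_inter.2 ⟨hj, hjA⟩)
      simp [hA j this]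
    rw [e]
    exact Finset.sum_le_sum_of_subset_of_nonneg Finset.inter_subset_right
      (fun j _ _ => abs_nonneg _)
  have h2 : (0:ℝ) ≤ ∑ k ∈ cubeS d m N, |y k| := Finset.sum_nonneg fun _ _ => abs_nonneg _
  calc (∑ k ∈ cubeS d m N, |y k|) / (2 * (N:ℝ) + 1) ^ d
      ≤ ∑ k ∈ cubeS d m N, |y k| := by
        apply div_le_self h2 (one_le_pow_real N)
    _ ≤ _ := h1

lemma avg_le_maxOp (y : (Fin d → ℤ) → ℝ) (A : Finset (Fin d → ℤ))
    (hA : ∀ j ∉ A, y j = 0) (m : Fin d → ℤ) (N : ℕ) :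
    (∑ k ∈ cubeS d m N, |y k|) / (2 * N + 1) ^ d ≤ maxOp d y m :=
  le_ciSup (bdd_of_supp y A hA m) N

/-- Vitali-type covering argument. -/
lemma vitali (lam : ℝ) (hlam : 0 < lam) :
    ∀ n : ℕ, ∀ x : (Fin d → ℤ) → ℝ, (∀ j, 0 ≤ x j) → ∀ A : Finset (Fin d → ℤ),
      (∀ j ∉ A, x j = 0) → ∀ T : Finset (Fin d → ℤ), T.card ≤ n →
      ∀ L : (Fin d → ℤ) → ℕ,
      (∀ k ∈ T, lam * (2 * (L k : ℝ) + 1) ^ d < ∑ j ∈ cubeS d k (L k), x j) →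
      lam * T.card ≤ 2 ^ d * ∑ j ∈ A, x j := by
  intro n
  induction n with
  | zero =>
    intro x hx A hA T hT L hL
    have : T = ∅ := Finset.card_eq_zero.1 (Nat.le_zero.1 hT)
    subst this
    simp only [Finset.card_empty, Nat.cast_zero, mul_zero]
    have : (0:ℝ) ≤ ∑ j ∈ A, x j := Finset.sum_nonneg fun j _ => hx j
    positivity
  | succ n ih =>
    intro x hx A hA T hT L hL
    rcases T.eq_empty_or_nonempty with rfl | hne
    · simp only [Finset.card_empty, Nat.cast_zero, mul_zero]
      have : (0:ℝ) ≤ ∑ j ∈ A, x j := Finset.sum_nonneg fun j _ => hx j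
      positivity
    obtain ⟨k0, hk0T, hk0max⟩ := T.exists_max_image L hne
    set L0 := L k0 with hL0
    set S0 := cubeS d k0 L0 with hS0
    set Big := cubeS d k0 (2 * L0) with hBig
    have hcard_split : (T \ Big).card + (T ∩ Big).card = T.card :=
      Finset.card_sdiff_add_card_inter T Big
    have hk0Big : k0 ∈ Big := self_mem_cubeS k0 (2 * L0)
    have hk0mem : k0 ∈ T ∩ Big := Finset.mem_inter.2 ⟨hk0T, hk0Big⟩
    have hDpos : 1 ≤ (T ∩ Big).card := Finset.card_pos.2 ⟨k0, hk0mem⟩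
    have hT' : (T \ Big).card ≤ n := by omega
    have hDcard : ((T ∩ Big).card : ℝ) ≤ 2 ^ d * (2 * (L0 : ℝ) + 1) ^ d := by
      have h1 : (T ∩ Big).card ≤ Big.card :=
        Finset.card_le_card Finset.inter_subset_right
      have h2 : ((Big.card : ℝ)) = (2 * ((2 * L0 : ℕ) : ℝ) + 1) ^ d := card_cubeS_real _ _
      have h3 : (2 * ((2 * L0 : ℕ) : ℝ) + 1) ^ d ≤ (2 * (2 * (L0:ℝ) + 1)) ^ d := by
        apply pow_le_pow_left₀ (by positivity)
        push_cast; linarith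
      calc ((T ∩ Big).card : ℝ) ≤ (Big.card : ℝ) := by exact_mod_cast h1
        _ = (2 * ((2 * L0 : ℕ) : ℝ) + 1) ^ d := h2
        _ ≤ (2 * (2 * (L0:ℝ) + 1)) ^ d := h3
        _ = 2 ^ d * (2 * (L0:ℝ) + 1) ^ d := mul_pow 2 _ d
    have h0 := hL k0 hk0T
    set x' : (Fin d → ℤ) → ℝ := fun j => if j ∈ S0 then 0 else x j with hx'def
    have hx' : ∀ j, 0 ≤ x' j := by
      intro j; simp only [hx'def]; split <;> [rfl; exact hx j]
    have hA' : ∀ j ∉ A, x' j = 0 := by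
      intro j hj; simp only [hx'def]; split <;> [rfl; exact hA j hj]
    have hM : ∀ k ∈ T \ Big, lam * (2 * (L k : ℝ) + 1) ^ d < ∑ j ∈ cubeS d k (L k), x' j := by
      intro k hk
      obtain ⟨hkT, hkBig⟩ := Finset.mem_sdiff.1 hk
      have hd : Disjoint (cubeS d k (L k)) S0 := cubeS_disjoint hkBig (hk0max k hkT)
      have he : ∑ j ∈ cubeS d k (L k), x' j = ∑ j ∈ cubeS d k (L k), x j := by
        refine Finset.sum_congr rfl fun j hj => ?_
        simp only [hx'def]
        rw [if_neg (Finset.disjoint_left.1 hd hj)]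
      rw [he]
      exact hL k hkT
    have IH := ih x' hx' A hA' (T \ Big) hT' L hM
    -- sum identity
    have e2 : ∑ j ∈ S0 ∩ A, x j = ∑ j ∈ S0, x j := by
      refine Finset.sum_subset Finset.inter_subset_left ?_
      intro j hj hj'
      have : j ∉ A := fun hjA => hj' (Finset.mem_inter.2 ⟨hj, hjA⟩)
      exact hA j this
    have e3 : ∑ j ∈ A, x' j = ∑ j ∈ A, x j - ∑ j ∈ S0, x j := by
      have h1 : ∑ j ∈ A, (x j - x' j) = ∑ j ∈ A ∩ S0, x j := by
        rw [← Finset.sum_filter_add_sum_filter_not A (fun j => j ∈ S0)]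
        have ha : ∀ j ∈ A.filter (fun j => j ∈ S0), x j - x' j = x j := by
          intro j hj
          obtain ⟨_, hjS⟩ := Finset.mem_filter.1 hj
          simp [hx'def, hjS]
        have hb : ∀ j ∈ A.filter (fun j => ¬ j ∈ S0), x j - x' j = 0 := by
          intro j hj
          obtain ⟨_, hjS⟩ := Finset.mem_filter.1 hj
          simp [hx'def, hjS]
        rw [Finset.sum_congr rfl ha, Finset.sum_congr rfl hb, Finset.sum_const_zero, add_zero,
          Finset.filter_mem_eq_inter]
      have h2 : ∑ j ∈ A ∩ S0, x j = ∑ j ∈ S0, x j := by rw [Finset.inter_comm]; exact e2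
      have h3 : ∑ j ∈ A, (x j - x' j) = ∑ j ∈ A, x j - ∑ j ∈ A, x' j :=
        Finset.sum_sub_distrib _ _
      rw [h3, h2] at h1
      linarith
    have hbound : lam * ((T ∩ Big).card : ℝ) ≤ 2 ^ d * ∑ j ∈ S0, x j := by
      calc lam * ((T ∩ Big).card : ℝ)
          ≤ lam * (2 ^ d * (2 * (L0:ℝ) + 1) ^ d) :=
            mul_le_mul_of_nonneg_left hDcard hlam.le
        _ = 2 ^ d * (lam * (2 * (L0:ℝ) + 1) ^ d) := by ring
        _ ≤ 2 ^ d * ∑ j ∈ S0, x j := by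
            apply mul_le_mul_of_nonneg_left h0.le (by positivity)
    have hc : (T.card : ℝ) = ((T \ Big).card : ℝ) + ((T ∩ Big).card : ℝ) := by
      exact_mod_cast hcard_split.symm
    rw [e3] at IH
    calc lam * (T.card : ℝ)
        = lam * ((T \ Big).card : ℝ) + lam * ((T ∩ Big).card : ℝ) := by rw [hc]; ring
      _ ≤ 2 ^ d * (∑ j ∈ A, x j - ∑ j ∈ S0, x j) + 2 ^ d * ∑ j ∈ S0, x j :=
          add_le_add IH hbound
      _ = 2 ^ d * ∑ j ∈ A, x j := by ring

/-- Weak type (1,1) estimate. -/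
lemma weak_type (y : (Fin d → ℤ) → ℝ) (hy : ∀ j, 0 ≤ y j) (A : Finset (Fin d → ℤ))
    (hA : ∀ j ∉ A, y j = 0) (T : Finset (Fin d → ℤ)) (t : ℝ) (ht : 0 < t)
    (hT : ∀ k ∈ T, t < maxOp d y k) :
    t * T.card ≤ 2 ^ (d + 1) * ∑ j ∈ A.filter (fun j => t < 2 * y j), y j := by
  set yh : (Fin d → ℤ) → ℝ := fun j => if t < 2 * y j then y j else 0 with hyhdef
  have hyh : ∀ j, 0 ≤ yh j := by
    intro j; simp only [hyhdef]; split <;> [exact hy j; rfl]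
  have hyhA : ∀ j ∉ A, yh j = 0 := by
    intro j hj; simp only [hyhdef]; split <;> [exact hA j hj; rfl]
  have hchoice : ∀ k ∈ T, ∃ Lk : ℕ,
      t / 2 * (2 * (Lk : ℝ) + 1) ^ d < ∑ j ∈ cubeS d k Lk, yh j := by
    intro k hk
    have h1 : t < maxOp d y k := hT k hk
    rw [maxOp, lt_ciSup_iff (bdd_of_supp y A hA k)] at h1
    obtain ⟨L, hL⟩ := h1
    refine ⟨L, ?_⟩
    have hn : (0:ℝ) < (2 * (L:ℝ) + 1) ^ d := pow_pos_real L
    rw [lt_div_iff₀ hn] at hL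
    have habs : ∑ j ∈ cubeS d k L, |y j| = ∑ j ∈ cubeS d k L, y j :=
      Finset.sum_congr rfl fun j _ => abs_of_nonneg (hy j)
    rw [habs] at hL
    have hsplit : ∑ j ∈ cubeS d k L, y j
        ≤ ∑ j ∈ cubeS d k L, yh j + t / 2 * (2 * (L:ℝ) + 1) ^ d := by
      have hpt : ∀ j ∈ cubeS d k L, y j ≤ yh j + t / 2 := by
        intro j _
        simp only [hyhdef]
        split
        · linarith [ht]
        · rename_i h; push_neg at h; linarith
      calc ∑ j ∈ cubeS d k L, y j ≤ ∑ j ∈ cubeS d k L, (yh j + t / 2) :=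
            Finset.sum_le_sum hpt
        _ = ∑ j ∈ cubeS d k L, yh j + (cubeS d k L).card * (t / 2) := by
            rw [Finset.sum_add_distrib, Finset.sum_const, nsmul_eq_mul]
        _ = ∑ j ∈ cubeS d k L, yh j + t / 2 * (2 * (L:ℝ) + 1) ^ d := by
            rw [card_cubeS_real]; ring
    linarith
  choose! Lf hLf using hchoice
  have hv := vitali (t / 2) (by linarith) T.card yh hyh A hyhA T le_rfl Lf hLf
  have hsum : ∑ j ∈ A, yh j = ∑ j ∈ A.filter (fun j => t < 2 * y j), y j := by
    rw [Finset.sum_filter]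
  rw [hsum] at hv
  have h2 : (2:ℝ) ^ (d + 1) = 2 * 2 ^ d := by rw [pow_succ]; ring
  rw [h2]
  linarith

lemma self_mul_rpow {a p : ℝ} (ha : 0 ≤ a) (hp : p ≠ 0) (hp1 : p - 1 ≠ 0) :
    a * a ^ (p - 1) = a ^ p := by
  rcases eq_or_lt_of_le ha with h | h
  · rw [← h, Real.zero_rpow hp, Real.zero_rpow hp1, mul_zero]
  · nth_rewrite 1 [← Real.rpow_one a]
    rw [← Real.rpow_add h, show (1 : ℝ) + (p - 1) = p by ring]

/-- Strong ℓ^p bound for the maximal operator of a finitely supported function,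
summed over a finite set. -/
lemma strong_type {p : ℝ} (hp : 1 < p) (y : (Fin d → ℤ) → ℝ) (hy : ∀ j, 0 ≤ y j)
    (A : Finset (Fin d → ℤ)) (hA : ∀ j ∉ A, y j = 0) (T : Finset (Fin d → ℤ)) :
    ∑ k ∈ T, (maxOp d y k) ^ p
      ≤ (2 ^ (d + 1) * (2:ℝ) ^ (p - 1) * p / (p - 1)) * ∑ j ∈ A, (y j) ^ p := by
  have hp0 : (0:ℝ) < p := by linarith
  have hp1 : (0:ℝ) < p - 1 := by linarith
  set f : (Fin d → ℤ) → ℝ := fun k => maxOp d y k with hfdef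
  have hf : ∀ k, 0 ≤ f k := fun k => maxOp_nonneg y k
  set Φ : (Fin d → ℤ) → ℝ → ℝ :=
    fun k => Set.indicator (Set.Ioo 0 (f k)) (fun t => p * t ^ (p - 1)) with hΦdef
  set Ψ : (Fin d → ℤ) → ℝ → ℝ :=
    fun j => Set.indicator (Set.Ioo 0 (2 * y j)) (fun t => 2 ^ (d + 1) * p * y j * t ^ (p - 2))
      with hΨdef
  have int1 : ∀ k, Integrable (Φ k) := by
    intro k
    rw [hΦdef, integrable_indicator_iff measurableSet_Ioo]
    have h := (intervalIntegral.intervalIntegrable_rpow' (show (-1:ℝ) < p - 1 by linarith)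
      (a := 0) (b := f k)).const_mul p
    exact h.1.mono_set Set.Ioo_subset_Ioc_self
  have int2 : ∀ j, Integrable (Ψ j) := by
    intro j
    rw [hΨdef, integrable_indicator_iff measurableSet_Ioo]
    have h := (intervalIntegral.intervalIntegrable_rpow' (show (-1:ℝ) < p - 2 by linarith)
      (a := 0) (b := 2 * y j)).const_mul (2 ^ (d + 1) * p * y j)
    exact h.1.mono_set Set.Ioo_subset_Ioc_self
  have eval1 : ∀ k, ∫ t, Φ k t = (f k) ^ p := by
    intro k
    rw [hΦdef, MeasureTheory.integral_indicator measurableSet_Ioo,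
      ← MeasureTheory.integral_Ioc_eq_integral_Ioo,
      ← intervalIntegral.integral_of_le (hf k),
      intervalIntegral.integral_const_mul,
      integral_rpow (Or.inl (show (-1:ℝ) < p - 1 by linarith))]
    rw [Real.zero_rpow (show p - 1 + 1 ≠ 0 by intro h; linarith), show p - 1 + 1 = p by ring]
    field_simp
    ring
  have eval2 : ∀ j, ∫ t, Ψ j t = (2 ^ (d + 1) * (2:ℝ) ^ (p - 1) * p / (p - 1)) * (y j) ^ p := by
    intro j
    rw [hΨdef, MeasureTheory.integral_indicator measurableSet_Ioo,
      ← MeasureTheory.integral_Ioc_eq_integral_Ioo,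
      ← intervalIntegral.integral_of_le (by linarith [hy j] : (0:ℝ) ≤ 2 * y j),
      intervalIntegral.integral_const_mul,
      integral_rpow (Or.inl (show (-1:ℝ) < p - 2 by linarith))]
    rw [Real.zero_rpow (show p - 2 + 1 ≠ 0 by intro h; linarith), show p - 2 + 1 = p - 1 by ring]
    have h1 : (2 * y j) ^ (p - 1) = 2 ^ (p - 1) * (y j) ^ (p - 1) :=
      Real.mul_rpow (by norm_num) (hy j)
    rw [h1]
    have h2 : y j * (y j) ^ (p - 1) = (y j) ^ p :=
      self_mul_rpow (hy j) (by linarith) (by linarith)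
    rw [sub_zero]
    field_simp
    linear_combination h2
  have hpt : ∀ t : ℝ, ∑ k ∈ T, Φ k t ≤ ∑ j ∈ A, Ψ j t := by
    intro t
    by_cases ht : 0 < t
    · have hl : ∑ k ∈ T, Φ k t
          = ((T.filter (fun k => t < f k)).card : ℝ) * (p * t ^ (p - 1)) := by
        have h : ∀ k ∈ T, Φ k t = if t < f k then p * t ^ (p - 1) else 0 := by
          intro k _
          simp only [hΦdef, Set.indicator_apply, Set.mem_Ioo]
          by_cases h' : t < f k <;> simp [h', ht]
        rw [Finset.sum_congr rfl h, ← Finset.sum_filter, Finset.sum_const, nsmul_eq_mul]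
      have hr : ∑ j ∈ A, Ψ j t
          = ∑ j ∈ A.filter (fun j => t < 2 * y j), 2 ^ (d + 1) * p * y j * t ^ (p - 2) := by
        have h : ∀ j ∈ A, Ψ j t
            = if t < 2 * y j then 2 ^ (d + 1) * p * y j * t ^ (p - 2) else 0 := by
          intro j _
          simp only [hΨdef, Set.indicator_apply, Set.mem_Ioo]
          by_cases h' : t < 2 * y j <;> simp [h', ht]
        rw [Finset.sum_congr rfl h, ← Finset.sum_filter]
      rw [hl, hr]
      have hw := weak_type y hy A hA (T.filter (fun k => t < f k)) t ht
        (fun k hk => (Finset.mem_filter.1 hk).2)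
      have htp2 : (0:ℝ) ≤ p * t ^ (p - 2) := by positivity
      have hkey : ((T.filter (fun k => t < f k)).card : ℝ) * (p * t ^ (p - 1))
          = (p * t ^ (p - 2)) * (t * ((T.filter (fun k => t < f k)).card : ℝ)) := by
        have : t ^ (p - 1) = t ^ (p - 2) * t := by
          rw [← Real.rpow_add_one (ne_of_gt ht), show p - 2 + 1 = p - 1 by ring]
        rw [this]; ring
      rw [hkey]
      calc (p * t ^ (p - 2)) * (t * ((T.filter (fun k => t < f k)).card : ℝ))
          ≤ (p * t ^ (p - 2)) * (2 ^ (d + 1) * ∑ j ∈ A.filter (fun j => t < 2 * y j), y j) :=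
            mul_le_mul_of_nonneg_left hw htp2
        _ = ∑ j ∈ A.filter (fun j => t < 2 * y j), 2 ^ (d + 1) * p * y j * t ^ (p - 2) := by
            rw [Finset.mul_sum, Finset.mul_sum]
            exact Finset.sum_congr rfl fun j _ => by ring
    · have hl : ∀ k ∈ T, Φ k t = 0 := by
        intro k _
        simp only [hΦdef, Set.indicator_apply, Set.mem_Ioo]
        simp [ht]
      have hr : (0:ℝ) ≤ ∑ j ∈ A, Ψ j t := by
        apply Finset.sum_nonneg
        intro j _
        apply Set.indicator_nonneg
        intro s hs
        have hs0 : (0:ℝ) < s := hs.1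
        have := hy j
        positivity
      rw [Finset.sum_congr rfl hl, Finset.sum_const_zero]
      exact hr
  calc ∑ k ∈ T, (maxOp d y k) ^ p
      = ∑ k ∈ T, ∫ t, Φ k t := by
        refine Finset.sum_congr rfl fun k _ => ?_
        rw [eval1 k]
    _ = ∫ t, ∑ k ∈ T, Φ k t := (integral_finset_sum T fun k _ => int1 k).symm
    _ ≤ ∫ t, ∑ j ∈ A, Ψ j t := by
        apply integral_mono (integrable_finset_sum T fun k _ => int1 k)
          (integrable_finset_sum A fun j _ => int2 j) hpt
    _ = ∑ j ∈ A, ∫ t, Ψ j t := integral_finset_sum A fun j _ => int2 j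
    _ = (2 ^ (d + 1) * (2:ℝ) ^ (p - 1) * p / (p - 1)) * ∑ j ∈ A, (y j) ^ p := by
        rw [Finset.mul_sum]
        exact Finset.sum_congr rfl fun j _ => eval2 j

end Aux

section Morrey

open Finset

variable {d : ℕ} {p q : ℝ}

lemma morreyNorm_nonneg (x : (Fin d → ℤ) → ℝ) : 0 ≤ morreyNorm d p q x :=
  Real.iSup_nonneg fun mN => by positivity

lemma sumpow_le (hp : 0 < p) {x : (Fin d → ℤ) → ℝ} (hx : MemMorrey d p q x)
    (m : Fin d → ℤ) (N : ℕ) :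
    (∑ k ∈ cubeS d m N, |x k| ^ p) ^ (1 / p)
      ≤ ((2 * (N : ℝ) + 1) ^ d) ^ (1 / p - 1 / q) * morreyNorm d p q x := by
  have hn0 : (0:ℝ) < (2 * (N:ℝ) + 1) ^ d := pow_pos_real N
  have h1 : ((2 * (N:ℝ) + 1) ^ d) ^ (1 / q - 1 / p) *
      (∑ k ∈ cubeS d m N, |x k| ^ p) ^ (1 / p) ≤ morreyNorm d p q x := by
    exact le_ciSup hx (m, N)
  have h2 : ((2 * (N:ℝ) + 1) ^ d) ^ (1 / p - 1 / q) *
      ((2 * (N:ℝ) + 1) ^ d) ^ (1 / q - 1 / p) = 1 := by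
    rw [← Real.rpow_add hn0, show 1 / p - 1 / q + (1 / q - 1 / p) = 0 by ring, Real.rpow_zero]
  calc (∑ k ∈ cubeS d m N, |x k| ^ p) ^ (1 / p)
      = ((2 * (N:ℝ) + 1) ^ d) ^ (1 / p - 1 / q) *
          (((2 * (N:ℝ) + 1) ^ d) ^ (1 / q - 1 / p) *
            (∑ k ∈ cubeS d m N, |x k| ^ p) ^ (1 / p)) := by
        rw [← mul_assoc, h2, one_mul]
    _ ≤ ((2 * (N:ℝ) + 1) ^ d) ^ (1 / p - 1 / q) * morreyNorm d p q x :=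
        mul_le_mul_of_nonneg_left h1 (Real.rpow_nonneg hn0.le _)

lemma avg_le_tail (hp : 1 < p) {x : (Fin d → ℤ) → ℝ} (hx : MemMorrey d p q x)
    (k : Fin d → ℤ) (L : ℕ) :
    (∑ j ∈ cubeS d k L, |x j|) / (2 * (L : ℝ) + 1) ^ d
      ≤ ((2 * (L : ℝ) + 1) ^ d) ^ (-(1 / q)) * morreyNorm d p q x := by
  set n : ℝ := (2 * (L:ℝ) + 1) ^ d with hndef
  have hn0 : (0:ℝ) < n := pow_pos_real L
  have hp0 : (0:ℝ) < p := by linarith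
  have hS : (0:ℝ) ≤ ∑ j ∈ cubeS d k L, |x j| ^ p :=
    Finset.sum_nonneg fun j _ => by positivity
  have hjen : (∑ j ∈ cubeS d k L, |x j|) / n
      ≤ (∑ j ∈ cubeS d k L, (1 / n) * |x j| ^ p) ^ (1 / p) := by
    have h := Real.arith_mean_le_rpow_mean (cubeS d k L) (fun _ => 1 / n) (fun j => |x j|)
      (fun i _ => by positivity) ?_ (fun i _ => abs_nonneg _) hp.le
    · rw [← Finset.mul_sum] at h
      calc (∑ j ∈ cubeS d k L, |x j|) / n = (1 / n) * ∑ j ∈ cubeS d k L, |x j| := by ring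
        _ ≤ _ := h
    · rw [Finset.sum_const, nsmul_eq_mul, card_cubeS_real, ← hndef]
      field_simp
  have e : (∑ j ∈ cubeS d k L, (1 / n) * |x j| ^ p) ^ (1 / p)
      = n ^ (-(1 / p)) * (∑ j ∈ cubeS d k L, |x j| ^ p) ^ (1 / p) := by
    rw [← Finset.mul_sum, Real.mul_rpow (by positivity) hS,
      show (1 / n : ℝ) = n⁻¹ from one_div n, Real.inv_rpow hn0.le, ← Real.rpow_neg hn0.le]
  have h3 := sumpow_le hp0 hx k L
  calc (∑ j ∈ cubeS d k L, |x j|) / n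
      ≤ (∑ j ∈ cubeS d k L, (1 / n) * |x j| ^ p) ^ (1 / p) := hjen
    _ = n ^ (-(1 / p)) * (∑ j ∈ cubeS d k L, |x j| ^ p) ^ (1 / p) := e
    _ ≤ n ^ (-(1 / p)) * (n ^ (1 / p - 1 / q) * morreyNorm d p q x) :=
        mul_le_mul_of_nonneg_left h3 (Real.rpow_nonneg hn0.le _)
    _ = n ^ (-(1 / q)) * morreyNorm d p q x := by
        rw [← mul_assoc, ← Real.rpow_add hn0,
          show -(1 / p) + (1 / p - 1 / q) = -(1 / q) by ring]

end Morrey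

/-- boundedness of the discrete Hardy–Littlewood maximal operator
on discrete Morrey spaces. -/
theorem maxOp_bounded_on_morrey (d : ℕ) (p q : ℝ) (hp : 1 < p) (hpq : p ≤ q) :
    ∃ C : ℝ, 0 < C ∧ ∀ x : (Fin d → ℤ) → ℝ, MemMorrey d p q x →
      MemMorrey d p q (fun m => maxOp d x m) ∧
      morreyNorm d p q (fun m => maxOp d x m) ≤ C * morreyNorm d p q x := by
  have hq0 : (0:ℝ) < q := by linarith
  have hp0 : (0:ℝ) < p := by linarith
  have hp1 : (0:ℝ) < p - 1 := by linarith
  set Ac : ℝ := 2 ^ (d + 1) * (2:ℝ) ^ (p - 1) * p / (p - 1) with hAcdef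
  have hAc : 0 < Ac := by
    apply div_pos _ hp1
    have h2 : (0:ℝ) < (2:ℝ) ^ (p - 1) := Real.rpow_pos_of_pos (by norm_num) _
    positivity
  set C : ℝ := Ac ^ (1 / p) * 2 ^ d + 1 with hCdef
  have hC : 0 < C := by
    have : (0:ℝ) < Ac ^ (1 / p) := Real.rpow_pos_of_pos hAc _
    positivity
  refine ⟨C, hC, fun x hx => ?_⟩
  have hX0 : 0 ≤ morreyNorm d p q x := morreyNorm_nonneg x
  have key : ∀ (m : Fin d → ℤ) (N : ℕ),
      ((2 * (N:ℝ) + 1) ^ d) ^ (1 / q - 1 / p) *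
        (∑ k ∈ cubeS d m N, |maxOp d x k| ^ p) ^ (1 / p) ≤ C * morreyNorm d p q x := by
    intro m N
    set X := morreyNorm d p q x with hXdef
    set n : ℝ := (2 * (N:ℝ) + 1) ^ d with hn
    have hn0 : (0:ℝ) < n := pow_pos_real N
    set y : (Fin d → ℤ) → ℝ := fun j => if j ∈ cubeS d m (2 * N) then |x j| else 0 with hydef
    have hy : ∀ j, 0 ≤ y j := by
      intro j; simp only [hydef]; split <;> [exact abs_nonneg _; rfl]
    have hyA : ∀ j ∉ cubeS d m (2 * N), y j = 0 := by
      intro j hj; simp only [hydef, if_neg hj]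
    set c : ℝ := n ^ (-(1 / q)) * X with hcdef
    have hc0 : 0 ≤ c := mul_nonneg (Real.rpow_nonneg hn0.le _) hX0
    have hpoint : ∀ k ∈ cubeS d m N, maxOp d x k ≤ maxOp d y k + c := by
      intro k hk
      have hMy0 : 0 ≤ maxOp d y k := maxOp_nonneg y k
      show (⨆ L : ℕ, (∑ j ∈ cubeS d k L, |x j|) / (2 * (L:ℝ) + 1) ^ d)
        ≤ maxOp d y k + c
      refine ciSup_le fun L => ?_
      by_cases hL : L ≤ N
      · have hsub := cubeS_subset hk hL
        have he : ∑ j ∈ cubeS d k L, |x j| = ∑ j ∈ cubeS d k L, |y j| := by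
          refine Finset.sum_congr rfl fun j hj => ?_
          have hjB : j ∈ cubeS d m (2 * N) := hsub hj
          simp [hydef, hjB, abs_abs]
        rw [he]
        have h := avg_le_maxOp y (cubeS d m (2 * N)) hyA k L
        linarith
      · push_neg at hL
        have h1 := avg_le_tail hp hx k L
        have hbase : n ≤ (2 * (L:ℝ) + 1) ^ d := by
          rw [hn]
          apply pow_le_pow_left₀ (by positivity)
          have : (N:ℝ) ≤ (L:ℝ) := by exact_mod_cast hL.le
          linarith
        have h2 : ((2 * (L:ℝ) + 1) ^ d) ^ (-(1 / q)) ≤ n ^ (-(1 / q)) := by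
          rw [Real.rpow_neg (by positivity), Real.rpow_neg hn0.le]
          have hmono := Real.rpow_le_rpow hn0.le hbase (by positivity : (0:ℝ) ≤ 1 / q)
          exact inv_anti₀ (Real.rpow_pos_of_pos hn0 _) hmono
        calc (∑ j ∈ cubeS d k L, |x j|) / (2 * (L:ℝ) + 1) ^ d
            ≤ ((2 * (L:ℝ) + 1) ^ d) ^ (-(1 / q)) * X := h1
          _ ≤ n ^ (-(1 / q)) * X := mul_le_mul_of_nonneg_right h2 hX0
          _ ≤ maxOp d y k + c := by rw [← hcdef]; linarith
    have s1 : (∑ k ∈ cubeS d m N, |maxOp d x k| ^ p) ^ (1 / p)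
        ≤ (∑ k ∈ cubeS d m N, (maxOp d y k + c) ^ p) ^ (1 / p) := by
      apply Real.rpow_le_rpow (Finset.sum_nonneg fun k _ => by positivity)
        (Finset.sum_le_sum fun k hk => ?_) (by positivity)
      rw [abs_of_nonneg (maxOp_nonneg x k)]
      exact Real.rpow_le_rpow (maxOp_nonneg x k) (hpoint k hk) hp0.le
    have s2 : (∑ k ∈ cubeS d m N, (maxOp d y k + c) ^ p) ^ (1 / p)
        ≤ (∑ k ∈ cubeS d m N, (maxOp d y k) ^ p) ^ (1 / p)
          + (∑ k ∈ cubeS d m N, c ^ p) ^ (1 / p) := by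
      have h := Real.Lp_add_le (cubeS d m N) (fun k => maxOp d y k) (fun _ => c) hp.le
      have e1 : ∑ k ∈ cubeS d m N, |maxOp d y k + c| ^ p
          = ∑ k ∈ cubeS d m N, (maxOp d y k + c) ^ p :=
        Finset.sum_congr rfl fun k _ => by
          rw [abs_of_nonneg (add_nonneg (maxOp_nonneg y k) hc0)]
      have e2 : ∑ k ∈ cubeS d m N, |maxOp d y k| ^ p
          = ∑ k ∈ cubeS d m N, (maxOp d y k) ^ p :=
        Finset.sum_congr rfl fun k _ => by rw [abs_of_nonneg (maxOp_nonneg y k)]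
      have e3 : ∑ k ∈ cubeS d m N, |c| ^ p = ∑ k ∈ cubeS d m N, c ^ p :=
        Finset.sum_congr rfl fun k _ => by rw [abs_of_nonneg hc0]
      rw [e1, e2, e3] at h
      exact h
    have s3 : (∑ k ∈ cubeS d m N, (maxOp d y k) ^ p) ^ (1 / p)
        ≤ Ac ^ (1 / p) * (∑ j ∈ cubeS d m (2 * N), (y j) ^ p) ^ (1 / p) := by
      have h := strong_type hp y hy (cubeS d m (2 * N)) hyA (cubeS d m N)
      rw [← hAcdef] at h
      have h2 := Real.rpow_le_rpow
        (Finset.sum_nonneg fun k _ => Real.rpow_nonneg (maxOp_nonneg y k) p) h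
        (by positivity : (0:ℝ) ≤ 1 / p)
      rwa [Real.mul_rpow hAc.le
        (Finset.sum_nonneg fun j _ => Real.rpow_nonneg (hy j) p)] at h2
    have s4 : (∑ j ∈ cubeS d m (2 * N), (y j) ^ p) ^ (1 / p)
        ≤ ((2 * ((2 * N : ℕ) : ℝ) + 1) ^ d) ^ (1 / p - 1 / q) * X := by
      have e : ∑ j ∈ cubeS d m (2 * N), (y j) ^ p
          = ∑ j ∈ cubeS d m (2 * N), |x j| ^ p :=
        Finset.sum_congr rfl fun j hj => by simp [hydef, hj]
      rw [e, hXdef]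
      exact sumpow_le hp0 hx m (2 * N)
    have he0 : (0:ℝ) ≤ 1 / p - 1 / q := by
      have h := one_div_le_one_div_of_le hp0 hpq
      linarith
    have s5 : ((2 * ((2 * N : ℕ) : ℝ) + 1) ^ d) ^ (1 / p - 1 / q)
        ≤ 2 ^ d * n ^ (1 / p - 1 / q) := by
      have he1 : 1 / p - 1 / q ≤ 1 := by
        have h1 : 1 / p ≤ 1 := by rw [div_le_one hp0]; linarith
        have h2 : (0:ℝ) ≤ 1 / q := by positivity
        linarith
      have hb : (2 * ((2 * N : ℕ) : ℝ) + 1) ^ d ≤ 2 ^ d * n := by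
        rw [hn, ← mul_pow]
        apply pow_le_pow_left₀ (by positivity)
        push_cast
        linarith [Nat.cast_nonneg (α := ℝ) N]
      calc ((2 * ((2 * N : ℕ) : ℝ) + 1) ^ d) ^ (1 / p - 1 / q)
          ≤ ((2:ℝ) ^ d * n) ^ (1 / p - 1 / q) :=
            Real.rpow_le_rpow (by positivity) hb he0
        _ = ((2:ℝ) ^ d) ^ (1 / p - 1 / q) * n ^ (1 / p - 1 / q) :=
            Real.mul_rpow (by positivity) hn0.le
        _ ≤ 2 ^ d * n ^ (1 / p - 1 / q) := by
            apply mul_le_mul_of_nonneg_right _ (Real.rpow_nonneg hn0.le _)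
            calc ((2:ℝ) ^ d) ^ (1 / p - 1 / q) ≤ ((2:ℝ) ^ d) ^ (1:ℝ) :=
                  Real.rpow_le_rpow_of_exponent_le (one_le_pow₀ (by norm_num)) he1
              _ = 2 ^ d := Real.rpow_one _
    have s6 : (∑ k ∈ cubeS d m N, c ^ p) ^ (1 / p) = n ^ (1 / p) * c := by
      rw [Finset.sum_const, nsmul_eq_mul, card_cubeS_real, ← hn,
        Real.mul_rpow hn0.le (Real.rpow_nonneg hc0 p)]
      congr 1
      rw [← Real.rpow_mul hc0, mul_one_div, div_self hp0.ne', Real.rpow_one]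
    have s7 : (∑ k ∈ cubeS d m N, |maxOp d x k| ^ p) ^ (1 / p)
        ≤ Ac ^ (1 / p) * (2 ^ d * n ^ (1 / p - 1 / q)) * X + n ^ (1 / p) * c := by
      have h45 : (∑ j ∈ cubeS d m (2 * N), (y j) ^ p) ^ (1 / p)
          ≤ 2 ^ d * n ^ (1 / p - 1 / q) * X :=
        le_trans s4 (mul_le_mul_of_nonneg_right s5 hX0)
      have h3' : (∑ k ∈ cubeS d m N, (maxOp d y k) ^ p) ^ (1 / p)
          ≤ Ac ^ (1 / p) * (2 ^ d * n ^ (1 / p - 1 / q) * X) :=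
        le_trans s3 (mul_le_mul_of_nonneg_left h45 (Real.rpow_nonneg hAc.le _))
      have := s6
      calc (∑ k ∈ cubeS d m N, |maxOp d x k| ^ p) ^ (1 / p)
          ≤ (∑ k ∈ cubeS d m N, (maxOp d y k + c) ^ p) ^ (1 / p) := s1
        _ ≤ (∑ k ∈ cubeS d m N, (maxOp d y k) ^ p) ^ (1 / p)
            + (∑ k ∈ cubeS d m N, c ^ p) ^ (1 / p) := s2
        _ ≤ Ac ^ (1 / p) * (2 ^ d * n ^ (1 / p - 1 / q) * X) + n ^ (1 / p) * c := by
            rw [s6] at *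
            exact add_le_add h3' le_rfl
        _ = Ac ^ (1 / p) * (2 ^ d * n ^ (1 / p - 1 / q)) * X + n ^ (1 / p) * c := by ring
    have e1 : n ^ (1 / q - 1 / p) * n ^ (1 / p - 1 / q) = 1 := by
      rw [← Real.rpow_add hn0, show 1 / q - 1 / p + (1 / p - 1 / q) = 0 by ring,
        Real.rpow_zero]
    have e2 : n ^ (1 / q - 1 / p) * (n ^ (1 / p) * n ^ (-(1 / q))) = 1 := by
      rw [← Real.rpow_add hn0, ← Real.rpow_add hn0,
        show 1 / q - 1 / p + (1 / p + -(1 / q)) = 0 by ring, Real.rpow_zero]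
    have final : n ^ (1 / q - 1 / p) *
        (Ac ^ (1 / p) * (2 ^ d * n ^ (1 / p - 1 / q)) * X + n ^ (1 / p) * c) = C * X := by
      rw [hcdef, hCdef]
      linear_combination (Ac ^ (1 / p) * 2 ^ d * X) * e1 + X * e2
    calc ((2 * (N:ℝ) + 1) ^ d) ^ (1 / q - 1 / p) *
          (∑ k ∈ cubeS d m N, |maxOp d x k| ^ p) ^ (1 / p)
        ≤ n ^ (1 / q - 1 / p) *
            (Ac ^ (1 / p) * (2 ^ d * n ^ (1 / p - 1 / q)) * X + n ^ (1 / p) * c) := by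
          rw [← hn]
          exact mul_le_mul_of_nonneg_left s7 (Real.rpow_nonneg hn0.le _)
      _ = C * X := final
      _ = C * morreyNorm d p q x := by rw [hXdef]
  constructor
  · refine ⟨C * morreyNorm d p q x, ?_⟩
    rintro v ⟨mN, rfl⟩
    exact key mN.1 mN.2
  · exact ciSup_le fun mN => key mN.1 mN.2
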